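/- Let A have block p-RIC δ_t for each order t, and let h ∈ ℝ^N with Ah = 0. Let G₀ be the set of k blocks of h with largest ℓ₂ norm and decompose G₀^c into consecutive groups G₁, G₂, … of ak blocks each, sorted by decreasing block ℓ₂ norm. Then for 0 < p ≤ 1: (1 − δ_{(a+1)k}) ‖h_{G₀∪G₁}‖_2^p ≤ (1 + δ_{ak})(ak)^{p/2−1} ‖h_{G₀^c}‖_{2,p}^p. -/

import Mathlib

lemma my_rpow_add_le {p a b : ℝ} (ha : 0 ≤ a) (hb : 0 ≤ b) (hp : 0 ≤ p) (hp1 : p ≤ 1) :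
    (a + b) ^ p ≤ a ^ p + b ^ p := by
  have h2 := NNReal.coe_le_coe.2 (NNReal.rpow_add_le_add_rpow a.toNNReal b.toNNReal hp hp1)
  push_cast at h2
  simpa [Real.coe_toNNReal a ha, Real.coe_toNNReal b hb] using h2

lemma my_abs_sum_rpow_le {ι : Type*} (S : Finset ι) (f : ι → ℝ) {p : ℝ} (hp : 0 < p) (hp1 : p ≤ 1) :
    |∑ j ∈ S, f j| ^ p ≤ ∑ j ∈ S, |f j| ^ p := by
  induction S using Finset.cons_induction with
  | empty => simp [Real.zero_rpow hp.ne']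
  | cons a s ha ih =>
    rw [Finset.sum_cons, Finset.sum_cons]
    calc |f a + ∑ j ∈ s, f j| ^ p ≤ (|f a| + |∑ j ∈ s, f j|) ^ p :=
          Real.rpow_le_rpow (abs_nonneg _) (abs_add_le _ _) hp.le
      _ ≤ |f a| ^ p + |∑ j ∈ s, f j| ^ p :=
          my_rpow_add_le (abs_nonneg _) (abs_nonneg _) hp.le hp1
      _ ≤ |f a| ^ p + ∑ j ∈ s, |f j| ^ p := by linarith [ih]

/-- For `h` in the null space of `A`, with `G 0` the `k` largest blocks of `h`
and `G j`, `j ≥ 1`, consecutive groups of `a*k` blocks sorted by decreasing block ℓ₂ norm,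
the block p-RIP constants give
`(1 - δ_{(a+1)k}) ‖h_{G₀∪G₁}‖₂^p ≤ (1 + δ_{ak})(ak)^(p/2-1) ‖h_{G₀ᶜ}‖_{2,p}^p`. -/
theorem null_space_head_bound (n d m k a : ℕ) (p δak δa1k : ℝ)
    (hp : 0 < p) (hp1 : p ≤ 1) (hk : 0 < k) (ha : 1 < a)
    (hδak : 0 ≤ δak) (hδa1k : 0 ≤ δa1k)
    (A : (Fin n → EuclideanSpace ℝ (Fin d)) →ₗ[ℝ] EuclideanSpace ℝ (Fin m))
    (hRIPu : ∀ v : Fin n → EuclideanSpace ℝ (Fin d),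
      (∃ T : Finset (Fin n), T.card ≤ a * k ∧ ∀ i ∉ T, v i = 0) →
      ∑ i, |A v i| ^ p ≤ (1 + δak) * Real.sqrt (∑ i, ‖v i‖ ^ 2) ^ p)
    (hRIPl : ∀ v : Fin n → EuclideanSpace ℝ (Fin d),
      (∃ T : Finset (Fin n), T.card ≤ (a + 1) * k ∧ ∀ i ∉ T, v i = 0) →
      (1 - δa1k) * Real.sqrt (∑ i, ‖v i‖ ^ 2) ^ p ≤ ∑ i, |A v i| ^ p)
    (h : Fin n → EuclideanSpace ℝ (Fin d)) (hh : A h = 0)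
    (G : ℕ → Finset (Fin n))
    (hG0 : (G 0).card = k)
    (hdisj : ∀ i j, i ≠ j → Disjoint (G i) (G j))
    (hcover : ∀ i : Fin n, ∃ j, i ∈ G j)
    (hcard : ∀ j, 1 ≤ j → (G j).card ≤ a * k)
    (hfull : ∀ j, 1 ≤ j → (G (j + 1)).Nonempty → (G j).card = a * k)
    (hsort : ∀ j, ∀ i ∈ G (j + 1), ∀ i' ∈ G j, ‖h i‖ ≤ ‖h i'‖) :
    (1 - δa1k) * Real.sqrt (∑ i ∈ G 0 ∪ G 1, ‖h i‖ ^ 2) ^ p ≤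
      (1 + δak) * ((a : ℝ) * k) ^ (p / 2 - 1) * ∑ i ∈ (G 0)ᶜ, ‖h i‖ ^ p := by
  classical
  set c : ℝ := (a : ℝ) * k with hcdef
  have hc : 0 < c := by positivity
  set r : Finset (Fin n) → (Fin n → EuclideanSpace ℝ (Fin d)) :=
    fun T i => if i ∈ T then h i else 0 with hr
  choose f hf using hcover
  set M : ℕ := (Finset.univ.sup f) + 1 with hM
  set S : Finset ℕ := Finset.Ico 1 M with hS
  set T : Finset (Fin n) := G 0 ∪ G 1 with hT
  -- restricted sums
  have fact1 : ∀ T' : Finset (Fin n), ∑ i, ‖r T' i‖ ^ 2 = ∑ i ∈ T', ‖h i‖ ^ 2 := by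
    intro T'
    rw [← Finset.sum_subset (Finset.subset_univ T') (fun i _ hi => by simp [hr, hi])]
    exact Finset.sum_congr rfl fun i hi => by simp [hr, hi]
  have rvanish : ∀ T' : Finset (Fin n), ∀ i ∉ T', r T' i = 0 := fun T' i hi => by simp [hr, hi]
  -- card bound for T
  have hcardT : T.card ≤ (a + 1) * k := by
    have h1 : T.card ≤ (G 0).card + (G 1).card := Finset.card_union_le _ _
    have h2 := hcard 1 le_rfl
    have h3 : (a + 1) * k = a * k + k := by ring
    omega
  -- step A
  have stepA : (1 - δa1k) * Real.sqrt (∑ i ∈ G 0 ∪ G 1, ‖h i‖ ^ 2) ^ p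
      ≤ ∑ i, |A (r T) i| ^ p := by
    have := hRIPl (r T) ⟨T, hcardT, rvanish T⟩
    rwa [fact1 T] at this
  -- step B : equal coordinates in abs
  have hsplit : r T + r Tᶜ = h := by
    funext i
    by_cases hi : i ∈ T <;> simp [hr, hi]
  have hzero : A (r T) + A (r Tᶜ) = 0 := by rw [← map_add, hsplit, hh]
  have hAeq : ∀ i_m : Fin m, |A (r T) i_m| = |A (r Tᶜ) i_m| := by
    intro i_m
    have h0 : A (r T) i_m + A (r Tᶜ) i_m = 0 := by
      have := congrArg (fun v : EuclideanSpace ℝ (Fin m) => v i_m) hzero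
      simpa using this
    rw [eq_neg_of_add_eq_zero_left h0, abs_neg]
  -- step C : decomposition of the tail
  have hdecomp : r Tᶜ = ∑ j ∈ S, r (G (j + 1)) := by
    funext i
    rw [Finset.sum_apply]
    by_cases hi : i ∈ T
    · have : ∀ j ∈ S, r (G (j + 1)) i = 0 := by
        intro j hj
        have hij : i ∉ G (j + 1) := by
          rcases Finset.mem_union.1 hi with h0 | h1
          · exact fun hmem => Finset.disjoint_left.1 (hdisj 0 (j + 1) (by omega)) h0 hmem
          · have hj1 : (1 : ℕ) ≠ j + 1 := by
              have := (Finset.mem_Ico.1 hj).1; omega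
            exact fun hmem => Finset.disjoint_left.1 (hdisj 1 (j + 1) hj1) h1 hmem
        simp [hr, hij]
      rw [Finset.sum_eq_zero this]
      simp [hr, hi]
    · have hfi2 : 2 ≤ f i := by
        by_contra hlt
        interval_cases hfi : f i
        · exact hi (Finset.mem_union_left _ (hfi ▸ hf i))
        · exact hi (Finset.mem_union_right _ (hfi ▸ hf i))
      have hfiS : f i - 1 ∈ S := by
        rw [hS, Finset.mem_Ico]
        have : f i ≤ Finset.univ.sup f := Finset.le_sup (Finset.mem_univ i)
        omega
      have hfi1 : f i - 1 + 1 = f i := by omega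
      rw [Finset.sum_eq_single (f i - 1)]
      · rw [hfi1]
        simp [hr, hf i, Finset.mem_compl.1, hi]
      · intro b hb hbne
        have : i ∉ G (b + 1) := fun hmem =>
          Finset.disjoint_left.1 (hdisj (f i) (b + 1) (by omega)) (hf i) hmem
        simp [hr, this]
      · intro habs; exact absurd hfiS habs
  -- triangle inequality step
  have stepC : ∑ i_m, |A (r Tᶜ) i_m| ^ p ≤ ∑ j ∈ S, ∑ i_m, |A (r (G (j + 1))) i_m| ^ p := by
    rw [hdecomp, map_sum]
    calc ∑ i_m, |(∑ j ∈ S, A (r (G (j + 1)))) i_m| ^ p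
        ≤ ∑ i_m, ∑ j ∈ S, |A (r (G (j + 1))) i_m| ^ p := by
          refine Finset.sum_le_sum fun i_m _ => ?_
          rw [WithLp.ofLp_sum, Finset.sum_apply]
          exact my_abs_sum_rpow_le S _ hp hp1
      _ = ∑ j ∈ S, ∑ i_m, |A (r (G (j + 1))) i_m| ^ p := Finset.sum_comm
  -- step D
  have stepD : ∀ j ∈ S, ∑ i_m, |A (r (G (j + 1))) i_m| ^ p
      ≤ (1 + δak) * Real.sqrt (∑ i ∈ G (j + 1), ‖h i‖ ^ 2) ^ p := by
    intro j hj
    have := hRIPu (r (G (j + 1))) ⟨G (j + 1), hcard (j + 1) (by omega), rvanish _⟩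
    rwa [fact1 (G (j + 1))] at this
  -- step E
  have stepE : ∀ j, 1 ≤ j → Real.sqrt (∑ i ∈ G (j + 1), ‖h i‖ ^ 2) ^ p
      ≤ c ^ (p / 2 - 1) * ∑ i ∈ G j, ‖h i‖ ^ p := by
    intro j hj
    by_cases hne : (G (j + 1)).Nonempty
    · have hcardf : (G j).card = a * k := hfull j hj hne
      set Sp : ℝ := ∑ i ∈ G j, ‖h i‖ ^ p with hSpdef
      have hSpnn : 0 ≤ Sp :=
        Finset.sum_nonneg fun i _ => Real.rpow_nonneg (norm_nonneg _) _
      have hX : 0 ≤ Sp / c := div_nonneg hSpnn hc.le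
      have key : ∀ i ∈ G (j + 1), ‖h i‖ ^ 2 ≤ (Sp / c) ^ (2 / p) := by
        intro i hi
        have h1 : c * ‖h i‖ ^ p ≤ Sp := by
          have hterm : ∀ i' ∈ G j, ‖h i‖ ^ p ≤ ‖h i'‖ ^ p := fun i' hi' =>
            Real.rpow_le_rpow (norm_nonneg _) (hsort j i hi i' hi') hp.le
          calc c * ‖h i‖ ^ p = ∑ _i' ∈ G j, ‖h i‖ ^ p := by
                rw [Finset.sum_const, hcardf, nsmul_eq_mul]; push_cast [hcdef]; ring
            _ ≤ Sp := Finset.sum_le_sum hterm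
        have h2 : ‖h i‖ ^ p ≤ Sp / c := (le_div_iff₀' hc).2 h1
        have h3 : (‖h i‖ ^ p) ^ (2 / p) ≤ (Sp / c) ^ (2 / p) :=
          Real.rpow_le_rpow (Real.rpow_nonneg (norm_nonneg _) _) h2 (by positivity)
        have h4 : (‖h i‖ ^ p) ^ (2 / p) = ‖h i‖ ^ 2 := by
          rw [← Real.rpow_natCast ‖h i‖ 2, ← Real.rpow_mul (norm_nonneg _)]
          congr 1
          push_cast
          field_simp
        rwa [h4] at h3
      have hsum : ∑ i ∈ G (j + 1), ‖h i‖ ^ 2 ≤ c * (Sp / c) ^ (2 / p) := by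
        calc ∑ i ∈ G (j + 1), ‖h i‖ ^ 2
            ≤ (G (j + 1)).card • (Sp / c) ^ (2 / p) := Finset.sum_le_card_nsmul _ _ _ key
          _ = ((G (j + 1)).card : ℝ) * (Sp / c) ^ (2 / p) := nsmul_eq_mul _ _
          _ ≤ c * (Sp / c) ^ (2 / p) := by
              refine mul_le_mul_of_nonneg_right ?_ (Real.rpow_nonneg hX _)
              rw [hcdef]
              exact_mod_cast hcard (j + 1) (by omega)
      have hz : (0:ℝ) ≤ c * (Sp / c) ^ (2 / p) := by positivity
      calc Real.sqrt (∑ i ∈ G (j + 1), ‖h i‖ ^ 2) ^ p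
          ≤ Real.sqrt (c * (Sp / c) ^ (2 / p)) ^ p :=
            Real.rpow_le_rpow (Real.sqrt_nonneg _) (Real.sqrt_le_sqrt hsum) hp.le
        _ = (c * (Sp / c) ^ (2 / p)) ^ (p / 2) := by
            rw [Real.sqrt_eq_rpow, ← Real.rpow_mul hz]
            congr 1
            ring
        _ = c ^ (p / 2) * ((Sp / c) ^ (2 / p)) ^ (p / 2) := Real.mul_rpow hc.le (Real.rpow_nonneg hX _)
        _ = c ^ (p / 2) * (Sp / c) := by
            rw [← Real.rpow_mul hX]
            congr 1
            rw [show 2 / p * (p / 2) = 1 by field_simp, Real.rpow_one]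
        _ = c ^ (p / 2 - 1) * Sp := by
            rw [Real.rpow_sub hc, Real.rpow_one]
            field_simp
    · rw [Finset.not_nonempty_iff_eq_empty.1 hne]
      simp only [Finset.sum_empty, Real.sqrt_zero, Real.zero_rpow hp.ne']
      positivity
  -- step F
  have stepF : ∑ j ∈ S, ∑ i ∈ G j, ‖h i‖ ^ p ≤ ∑ i ∈ (G 0)ᶜ, ‖h i‖ ^ p := by
    rw [← Finset.sum_biUnion]
    · refine Finset.sum_le_sum_of_subset_of_nonneg ?_
        (fun i _ _ => Real.rpow_nonneg (norm_nonneg _) _)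
      intro i hi
      rcases Finset.mem_biUnion.1 hi with ⟨j, hj, hij⟩
      refine Finset.mem_compl.2 fun h0 => ?_
      have hj1 : (1:ℕ) ≤ j := (Finset.mem_Ico.1 hj).1
      exact Finset.disjoint_left.1 (hdisj j 0 (by omega)) hij h0
    · intro x hx y hy hxy
      exact hdisj x y hxy
  -- assemble
  have h1ak : (0:ℝ) ≤ 1 + δak := by linarith
  have hcp : (0:ℝ) ≤ c ^ (p / 2 - 1) := Real.rpow_nonneg hc.le _
  calc (1 - δa1k) * Real.sqrt (∑ i ∈ G 0 ∪ G 1, ‖h i‖ ^ 2) ^ p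
      ≤ ∑ i_m, |A (r T) i_m| ^ p := stepA
    _ = ∑ i_m, |A (r Tᶜ) i_m| ^ p := Finset.sum_congr rfl fun i_m _ => by rw [hAeq i_m]
    _ ≤ ∑ j ∈ S, ∑ i_m, |A (r (G (j + 1))) i_m| ^ p := stepC
    _ ≤ ∑ j ∈ S, (1 + δak) * Real.sqrt (∑ i ∈ G (j + 1), ‖h i‖ ^ 2) ^ p :=
        Finset.sum_le_sum stepD
    _ ≤ ∑ j ∈ S, (1 + δak) * (c ^ (p / 2 - 1) * ∑ i ∈ G j, ‖h i‖ ^ p) :=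
        Finset.sum_le_sum fun j hj =>
          mul_le_mul_of_nonneg_left (stepE j (Finset.mem_Ico.1 hj).1) h1ak
    _ = (1 + δak) * c ^ (p / 2 - 1) * ∑ j ∈ S, ∑ i ∈ G j, ‖h i‖ ^ p := by
        rw [Finset.mul_sum]
        exact Finset.sum_congr rfl fun j _ => by ring
    _ ≤ (1 + δak) * c ^ (p / 2 - 1) * ∑ i ∈ (G 0)ᶜ, ‖h i‖ ^ p :=
        mul_le_mul_of_nonneg_left stepF (mul_nonneg h1ak hcp)
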